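/- Let X be a continuous stationary random field on ℝ², u ∈ ℝ a constant threshold with P(X(0) > u) > 0, and T ⊂ ℝ² compact with positive Lebesgue measure. Then for every r ≥ 0, the conditional probability P(B(0,r) ⊆ E_X(u) | X(0) > u) equals E[𝓛(E_X(u)_{−r} ∩ T)] / E[𝓛(E_X(u) ∩ T)], where the subscript −r denotes set erosion by radius r. -/
import Mathlib

open MeasureTheory ProbabilityTheory Metric Pointwise

/-- Erosion of a set by the closed ball of radius `r`. -/
def erode (S : Set (EuclideanSpace ℝ (Fin 2))) (r : ℝ) : Set (EuclideanSpace ℝ (Fin 2)) :=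
  (Sᶜ + closedBall (0 : EuclideanSpace ℝ (Fin 2)) r)ᶜ

namespace Stmt7Aux

local notation "E2" => EuclideanSpace ℝ (Fin 2)

lemma erode_eq (S : Set (EuclideanSpace ℝ (Fin 2))) (r : ℝ) :
    erode S r = {t | closedBall t r ⊆ S} := by
  ext t
  simp only [erode, Set.mem_compl_iff, Set.mem_add, Set.mem_setOf_eq, not_exists]
  constructor
  · intro h y hy
    by_contra hyS
    refine h y ⟨hyS, t - y, ?_, by abel⟩
    rw [mem_closedBall_zero_iff]
    simpa [dist_eq_norm, norm_sub_rev] using hy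
  · rintro h a ⟨haS, b, hb, rfl⟩
    apply haS
    apply h
    rw [mem_closedBall_zero_iff] at hb
    rw [mem_closedBall]
    simpa [dist_eq_norm] using hb

lemma key {r u : ℝ} (hr : 0 ≤ r) {D : Set (EuclideanSpace ℝ (Fin 2))}
    (hD : D ⊆ closedBall 0 r)
    (hdense : closedBall (0 : EuclideanSpace ℝ (Fin 2)) r ⊆ closure D)
    {g : EuclideanSpace ℝ (Fin 2) → ℝ} (hg : Continuous g) :
    (∀ s ∈ closedBall (0 : EuclideanSpace ℝ (Fin 2)) r, u < g s) ↔
      ∃ q : ℚ, u < (q : ℝ) ∧ ∀ s ∈ D, (q : ℝ) ≤ g s := by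
  constructor
  · intro h
    obtain ⟨x, hx, hmin⟩ := (isCompact_closedBall (0 : EuclideanSpace ℝ (Fin 2)) r).exists_isMinOn
      ⟨0, mem_closedBall_self hr⟩ hg.continuousOn
    obtain ⟨q, hq1, hq2⟩ := exists_rat_btwn (h x hx)
    exact ⟨q, hq1, fun s hs => le_of_lt (lt_of_lt_of_le hq2 (isMinOn_iff.mp hmin s (hD hs)))⟩
  · rintro ⟨q, hq, hq2⟩ s hs
    have hclosed : IsClosed {y | (q : ℝ) ≤ g y} := isClosed_le continuous_const hg
    have hsub : closure D ⊆ {y | (q : ℝ) ≤ g y} :=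
      hclosed.closure_subset_iff.mpr (fun y hy => hq2 y hy)
    exact lt_of_lt_of_le hq (hsub (hdense hs))

lemma ball_subset_iff {r u : ℝ} (t : EuclideanSpace ℝ (Fin 2)) (g : EuclideanSpace ℝ (Fin 2) → ℝ) :
    closedBall t r ⊆ {y | g y > u} ↔
      ∀ s ∈ closedBall (0 : EuclideanSpace ℝ (Fin 2)) r, u < g (s + t) := by
  constructor
  · intro h s hs
    refine h ?_
    rw [mem_closedBall_zero_iff] at hs
    rw [mem_closedBall]
    simpa [dist_eq_norm] using hs
  · intro h y hy
    have hy' : y - t ∈ closedBall (0 : EuclideanSpace ℝ (Fin 2)) r := by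
      rw [mem_closedBall_zero_iff]
      rw [mem_closedBall] at hy
      simpa [dist_eq_norm] using hy
    have := h (y - t) hy'
    simpa using this

lemma main {Ω : Type*} [MeasurableSpace Ω] (P : Measure Ω) [IsProbabilityMeasure P]
    (X : EuclideanSpace ℝ (Fin 2) → Ω → ℝ)
    (hcont : ∀ ω, Continuous fun t => X t ω)
    (hstat : ∀ t : EuclideanSpace ℝ (Fin 2),
      Measure.map (fun ω => (fun s => X (s + t) ω)) P
        = Measure.map (fun ω => (fun s => X s ω)) P)
    (hmeas : ∀ t, Measurable (X t))
    (u : ℝ) (T : Set (EuclideanSpace ℝ (Fin 2))) (r : ℝ) (hr : 0 ≤ r) :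
    (∫⁻ ω, volume (erode {t | X t ω > u} r ∩ T) ∂P)
      = volume T * P {ω | closedBall (0 : EuclideanSpace ℝ (Fin 2)) r ⊆ {t | X t ω > u}} := by
  -- countable dense subset of the closed ball
  obtain ⟨D₀, hD₀c, hD₀d⟩ :=
    TopologicalSpace.exists_countable_dense (closedBall (0 : EuclideanSpace ℝ (Fin 2)) r)
  set D : Set (EuclideanSpace ℝ (Fin 2)) := Subtype.val '' D₀ with hDdef
  have hDc : D.Countable := hD₀c.image _
  have hDsub : D ⊆ closedBall (0 : EuclideanSpace ℝ (Fin 2)) r := by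
    rintro x ⟨y, _, rfl⟩; exact y.2
  have hDdense : closedBall (0 : EuclideanSpace ℝ (Fin 2)) r ⊆ closure D :=
    Subtype.dense_iff.mp hD₀d
  -- joint measurability
  have hX : Measurable (Function.uncurry X) :=
    measurable_uncurry_of_continuous_of_measurable hcont hmeas
  -- the joint event
  set S : Set ((EuclideanSpace ℝ (Fin 2)) × Ω) :=
    {p | ∃ q : ℚ, u < (q : ℝ) ∧ ∀ s ∈ D, (q : ℝ) ≤ X (s + p.1) p.2} with hSdef
  have hS : MeasurableSet S := by
    have : S = ⋃ (q : ℚ), ⋃ (_ : u < (q : ℝ)),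
        ⋂ (s ∈ D), {p : (EuclideanSpace ℝ (Fin 2)) × Ω | (q : ℝ) ≤ X (s + p.1) p.2} := by
      ext p
      simp [hSdef, Set.mem_iInter, Set.mem_iUnion]
    rw [this]
    refine MeasurableSet.iUnion fun q => MeasurableSet.iUnion fun _ => ?_
    refine MeasurableSet.biInter hDc fun s _ => ?_
    have hm : Measurable fun p : (EuclideanSpace ℝ (Fin 2)) × Ω => X (s + p.1) p.2 :=
      hX.comp ((measurable_fst.const_add s).prodMk measurable_snd)
    exact measurableSet_le measurable_const hm
  -- sections of S
  have hsec : ∀ ω, erode {t | X t ω > u} r ∩ T = ((fun t => (t, ω)) ⁻¹' S) ∩ T := by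
    intro ω
    rw [erode_eq]
    ext t
    simp only [Set.mem_inter_iff, Set.mem_setOf_eq, Set.mem_preimage, hSdef, and_congr_left_iff]
    intro _
    rw [ball_subset_iff t (fun y => X y ω)]
    exact key hr hDsub hDdense ((hcont ω).comp (continuous_id.add continuous_const))
  have hsecm : ∀ ω : Ω, MeasurableSet ((fun t => (t, ω)) ⁻¹' S) := fun ω =>
    hS.preimage (measurable_id.prodMk measurable_const)
  -- stationarity: each t-section of S has the same probability
  set G : Set ((EuclideanSpace ℝ (Fin 2)) → ℝ) :=
    {f | ∃ q : ℚ, u < (q : ℝ) ∧ ∀ s ∈ D, (q : ℝ) ≤ f s} with hGdef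
  have hG : MeasurableSet G := by
    have : G = ⋃ (q : ℚ), ⋃ (_ : u < (q : ℝ)),
        ⋂ (s ∈ D), {f : (EuclideanSpace ℝ (Fin 2)) → ℝ | (q : ℝ) ≤ f s} := by
      ext f
      simp [hGdef, Set.mem_iInter, Set.mem_iUnion]
    rw [this]
    refine MeasurableSet.iUnion fun q => MeasurableSet.iUnion fun _ => ?_
    exact MeasurableSet.biInter hDc fun s _ =>
      measurableSet_le measurable_const (measurable_pi_apply s)
  have hstatP : ∀ t : EuclideanSpace ℝ (Fin 2),
      P (Prod.mk t ⁻¹' S) = P {ω | closedBall (0 : EuclideanSpace ℝ (Fin 2)) r ⊆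
        {y | X y ω > u}} := by
    intro t
    have h1 : Prod.mk t ⁻¹' S = (fun ω => (fun s => X (s + t) ω)) ⁻¹' G := by
      ext ω; simp [hSdef, hGdef]
    have hm1 : Measurable fun ω => (fun s => X (s + t) ω) :=
      measurable_pi_iff.mpr fun s => hmeas (s + t)
    have hm0 : Measurable fun ω => (fun s => X s ω) :=
      measurable_pi_iff.mpr fun s => hmeas s
    have h2 : {ω | closedBall (0 : EuclideanSpace ℝ (Fin 2)) r ⊆ {y | X y ω > u}}
        = (fun ω => (fun s => X s ω)) ⁻¹' G := by
      ext ω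
      simp only [Set.mem_setOf_eq, Set.mem_preimage, hGdef]
      rw [ball_subset_iff (0 : EuclideanSpace ℝ (Fin 2)) (fun y => X y ω)]
      simp only [add_zero]
      exact key hr hDsub hDdense (hcont ω)
    rw [h1, h2, ← Measure.map_apply hm1 hG, ← Measure.map_apply hm0 hG, hstat t]
  -- Fubini
  calc
    (∫⁻ ω, volume (erode {t | X t ω > u} r ∩ T) ∂P)
        = ∫⁻ ω, (volume.restrict T) ((fun t => (t, ω)) ⁻¹' S) ∂P := by
          refine lintegral_congr fun ω => ?_
          rw [hsec ω, ← Measure.restrict_apply (hsecm ω)]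
    _ = ((volume.restrict T).prod P) S := (Measure.prod_apply_symm hS).symm
    _ = ∫⁻ t, P (Prod.mk t ⁻¹' S) ∂(volume.restrict T) := Measure.prod_apply hS
    _ = ∫⁻ _, P {ω | closedBall (0 : EuclideanSpace ℝ (Fin 2)) r ⊆ {y | X y ω > u}}
          ∂(volume.restrict T) := lintegral_congr fun t => hstatP t
    _ = volume T * P {ω | closedBall (0 : EuclideanSpace ℝ (Fin 2)) r ⊆ {y | X y ω > u}} := by
          rw [lintegral_const, Measure.restrict_apply_univ, mul_comm]

end Stmt7Aux

theorem stmt_7 {Ω : Type*} [MeasurableSpace Ω] (P : Measure Ω) [IsProbabilityMeasure P]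
    (X : EuclideanSpace ℝ (Fin 2) → Ω → ℝ)
    (hcont : ∀ ω, Continuous fun t => X t ω)
    (hstat : ∀ t : EuclideanSpace ℝ (Fin 2),
      Measure.map (fun ω => (fun s => X (s + t) ω)) P
        = Measure.map (fun ω => (fun s => X s ω)) P)
    (hmeas : ∀ t, Measurable (X t))
    (u : ℝ) (hpos : 0 < P {ω | X 0 ω > u})
    (T : Set (EuclideanSpace ℝ (Fin 2))) (hT : IsCompact T) (hTpos : 0 < volume T)
    (r : ℝ) (hr : 0 ≤ r) :
    (P[|{ω | X 0 ω > u}]) {ω | closedBall (0 : EuclideanSpace ℝ (Fin 2)) r ⊆ {t | X t ω > u}}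
      = (∫⁻ ω, volume (erode {t | X t ω > u} r ∩ T) ∂P)
        / (∫⁻ ω, volume ({t | X t ω > u} ∩ T) ∂P) := by
  have hnum := Stmt7Aux.main P X hcont hstat hmeas u T r hr
  have hden := Stmt7Aux.main P X hcont hstat hmeas u T 0 le_rfl
  have herode0 : ∀ ω, erode {t | X t ω > u} 0 ∩ T = {t | X t ω > u} ∩ T := by
    intro ω
    rw [Stmt7Aux.erode_eq]
    congr 1
    ext t
    simp [closedBall_zero]
  have hball0 : {ω | closedBall (0 : EuclideanSpace ℝ (Fin 2)) 0 ⊆ {t | X t ω > u}}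
      = {ω | X 0 ω > u} := by
    ext ω
    simp [closedBall_zero]
  have hden' : (∫⁻ ω, volume ({t | X t ω > u} ∩ T) ∂P) = volume T * P {ω | X 0 ω > u} := by
    calc (∫⁻ ω, volume ({t | X t ω > u} ∩ T) ∂P)
        = ∫⁻ ω, volume (erode {t | X t ω > u} 0 ∩ T) ∂P :=
          lintegral_congr fun ω => by rw [herode0 ω]
      _ = volume T * P {ω | X 0 ω > u} := by rw [hden, hball0]
  rw [hnum, hden']
  have hB : MeasurableSet {ω | X 0 ω > u} := measurableSet_lt measurable_const (hmeas 0)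
  have hsub : {ω | closedBall (0 : EuclideanSpace ℝ (Fin 2)) r ⊆ {t | X t ω > u}}
      ⊆ {ω | X 0 ω > u} := fun ω hω => hω (mem_closedBall_self hr)
  rw [cond_apply hB]
  rw [Set.inter_eq_right.mpr hsub]
  rw [ENNReal.mul_div_mul_left _ _ (ne_of_gt hTpos) hT.measure_lt_top.ne]
  rw [ENNReal.div_eq_inv_mul]
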